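/- Let $A$ be a bounded normal operator on a complex Hilbert space $X$ with spectral measure $E_A$. Then $\mathcal{E}^{\{0\}}(A) = \bigcup_{\alpha>0} E_A(\Delta_\alpha) X$, where $\Delta_\alpha := \{\lambda\in\mathbb{C} : |\lambda|\le\alpha\}$. -/

import Mathlib

open MeasureTheory

variable {X : Type*} [NormedAddCommGroup X] [InnerProductSpace ℂ X] [CompleteSpace X]

/-- `E` is the projection-valued spectral measure of the bounded (normal) operator `A`
on the complex Hilbert space `X`, and `μ f` is the associated positive Borel measure
`μ f (s) = ⟨E(s) f, f⟩ = ‖E(s) f‖²`. -/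
structure IsSpectralMeasureOf (A : X →L[ℂ] X) (E : Set ℂ → X →L[ℂ] X)
    (μ : X → Measure ℂ) : Prop where
  empty : E ∅ = 0
  univ : E Set.univ = ContinuousLinearMap.id ℂ X
  inter : ∀ s t : Set ℂ, MeasurableSet s → MeasurableSet t →
    E (s ∩ t) = (E s).comp (E t)
  symm : ∀ s : Set ℂ, MeasurableSet s → ∀ f g : X,
    (inner ℂ (E s f) g : ℂ) = inner ℂ f (E s g)
  countably_additive : ∀ s : ℕ → Set ℂ, (∀ n, MeasurableSet (s n)) →
    Pairwise (Function.onFun Disjoint s) → ∀ f : X,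
      HasSum (fun n => E (s n) f) (E (⋃ n, s n) f)
  mu_def : ∀ (f : X) (s : Set ℂ), MeasurableSet s →
    μ f s = ENNReal.ofReal (‖E s f‖ ^ 2)
  mu_univ : ∀ f : X, μ f Set.univ = ENNReal.ofReal (‖f‖ ^ 2)
  inner_A_eq : ∀ f : X, (inner ℂ (A f) f : ℂ) = ∫ z : ℂ, z ∂(μ f)
  norm_pow_eq : ∀ (f : X) (n : ℕ),
    ENNReal.ofReal (‖(A ^ n) f‖ ^ 2) =
      ∫⁻ z : ℂ, ENNReal.ofReal (‖z‖ ^ (2 * n)) ∂(μ f)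

/-- If the projection of `f` onto the complement of `s` vanishes, then `f` is fixed by the
projection onto `s`. -/
lemma IsSpectralMeasureOf.eq_of_compl_eq_zero {A : X →L[ℂ] X} {E : Set ℂ → X →L[ℂ] X}
    {μ : X → Measure ℂ} (hE : IsSpectralMeasureOf A E μ) {s : Set ℂ}
    (hs : MeasurableSet s) {f : X} (h : E sᶜ f = 0) : E s f = f := by
  set t : ℕ → Set ℂ := fun n => if n = 0 then s else if n = 1 then sᶜ else ∅ with ht
  have htm : ∀ n, MeasurableSet (t n) := by
    intro n
    rcases n with _ | _ | n <;> simp [ht, hs, hs.compl]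
  have htd : Pairwise (Function.onFun Disjoint t) := by
    intro i j hij
    unfold Function.onFun
    rcases i with _ | _ | i <;> rcases j with _ | _ | j <;>
      first
        | exact absurd rfl hij
        | exact disjoint_compl_right
        | exact disjoint_compl_left
        | exact Set.disjoint_empty _
        | exact Set.empty_disjoint _
  have htu : (⋃ n, t n) = Set.univ := by
    apply Set.eq_univ_of_forall
    intro z
    by_cases hz : z ∈ s
    · exact Set.mem_iUnion.2 ⟨0, by simp [ht, hz]⟩
    · exact Set.mem_iUnion.2 ⟨1, by simp [ht, hz]⟩
  have h1 := hE.countably_additive t htm htd f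
  rw [htu, hE.univ] at h1
  have h2 : HasSum (fun n => E (t n) f) (E s f) := by
    have heq : (fun n => E (t n) f) = fun n => if n = 0 then E s f else 0 := by
      funext n
      rcases n with _ | _ | n <;> simp [ht, h, hE.empty]
    rw [heq]
    exact hasSum_ite_eq 0 (E s f)
  exact h2.unique h1

theorem exp_type_eq_union_ranges (A : X →L[ℂ] X) (hA : IsStarNormal A)
    (E : Set ℂ → X →L[ℂ] X) (μ : X → Measure ℂ) (hE : IsSpectralMeasureOf A E μ) :
    {f : X | ∃ α : ℝ, 0 < α ∧ ∃ c : ℝ, 0 < c ∧ ∀ n : ℕ, ‖(A ^ n) f‖ ≤ c * α ^ n} =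
      ⋃ α : ℝ, ⋃ _ : 0 < α, Set.range (E {z : ℂ | ‖z‖ ≤ α}) := by
  ext f
  simp only [Set.mem_setOf_eq, Set.mem_iUnion, Set.mem_range]
  constructor
  · rintro ⟨α, hα, c, hc, hbound⟩
    obtain ⟨β, hαβ, hβ⟩ : ∃ β : ℝ, α < β ∧ 0 < β := ⟨α + 1, by linarith, by linarith⟩
    refine ⟨β, hβ, f, ?_⟩
    -- Chebyshev: the measure of {β ≤ |z|} is at most `c² ((α/β)²)ⁿ` for every `n`.
    have hmeas : ∀ n : ℕ, μ f {z : ℂ | β ≤ ‖z‖} ≤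
        ENNReal.ofReal (c ^ 2 * ((α / β) ^ 2) ^ n) := by
      intro n
      have hmark : ENNReal.ofReal (β ^ (2 * n)) * μ f {z : ℂ | β ≤ ‖z‖} ≤
          ∫⁻ z : ℂ, ENNReal.ofReal (‖z‖ ^ (2 * n)) ∂(μ f) := by
        have hsub : {z : ℂ | β ≤ ‖z‖} ⊆
            {z : ℂ | ENNReal.ofReal (β ^ (2 * n)) ≤ ENNReal.ofReal (‖z‖ ^ (2 * n))} := by
          intro z hz
          exact ENNReal.ofReal_le_ofReal (pow_le_pow_left₀ hβ.le hz _)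
        calc ENNReal.ofReal (β ^ (2 * n)) * μ f {z : ℂ | β ≤ ‖z‖}
            ≤ ENNReal.ofReal (β ^ (2 * n)) *
              μ f {z : ℂ | ENNReal.ofReal (β ^ (2 * n)) ≤
                ENNReal.ofReal (‖z‖ ^ (2 * n))} :=
              mul_le_mul_right (measure_mono hsub) _
          _ ≤ _ := mul_meas_ge_le_lintegral₀
              (Measurable.aemeasurable
                ((continuous_norm.pow _).measurable.ennreal_ofReal)) _
      have hint : ∫⁻ z : ℂ, ENNReal.ofReal (‖z‖ ^ (2 * n)) ∂(μ f) ≤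
          ENNReal.ofReal ((c * α ^ n) ^ 2) := by
        rw [← hE.norm_pow_eq f n]
        refine ENNReal.ofReal_le_ofReal ?_
        have h1 := hbound n
        have h0 : (0 : ℝ) ≤ ‖(A ^ n) f‖ := norm_nonneg _
        nlinarith
      have hβn : ENNReal.ofReal (β ^ (2 * n)) ≠ 0 := by
        simp [ENNReal.ofReal_eq_zero, not_le, pow_pos hβ]
      have hβtop : ENNReal.ofReal (β ^ (2 * n)) ≠ ⊤ := ENNReal.ofReal_ne_top
      have hle := hmark.trans hint
      have hdiv : μ f {z : ℂ | β ≤ ‖z‖} ≤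
          ENNReal.ofReal ((c * α ^ n) ^ 2) / ENNReal.ofReal (β ^ (2 * n)) := by
        rw [ENNReal.le_div_iff_mul_le (Or.inl hβn) (Or.inl hβtop), mul_comm]
        exact hle
      refine hdiv.trans_eq ?_
      rw [← ENNReal.ofReal_div_of_pos (pow_pos hβ _)]
      congr 1
      field_simp
      rw [div_pow, ← pow_mul, ← pow_mul, ← pow_mul, ← mul_div_assoc,
        mul_div_cancel_left₀ _ (by positivity : β ^ (2 * n) ≠ 0), mul_comm]
    -- hence the measure is zero
    have htend : Filter.Tendsto (fun n : ℕ => ENNReal.ofReal (c ^ 2 * ((α / β) ^ 2) ^ n))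
        Filter.atTop (nhds 0) := by
      have hr : ((α / β) ^ 2 : ℝ) < 1 := by
        have h1 : α / β < 1 := (div_lt_one hβ).2 hαβ
        have h2 : 0 ≤ α / β := by positivity
        nlinarith
      have hr0 : (0 : ℝ) ≤ (α / β) ^ 2 := by positivity
      have h3 : Filter.Tendsto (fun n : ℕ => c ^ 2 * ((α / β) ^ 2) ^ n)
          Filter.atTop (nhds 0) := by
        have := tendsto_pow_atTop_nhds_zero_of_lt_one hr0 hr
        simpa using this.const_mul (c ^ 2)
      have := (ENNReal.continuous_ofReal.tendsto 0).comp h3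
      simpa [Function.comp_def] using this
    have hzero : μ f {z : ℂ | β ≤ ‖z‖} = 0 :=
      le_zero_iff.1 (ge_of_tendsto' htend hmeas)
    -- so the projection onto the complement of the disk kills f
    have hm : MeasurableSet {z : ℂ | ‖z‖ ≤ β} :=
      (isClosed_le continuous_norm continuous_const).measurableSet
    have hcompl0 : μ f {z : ℂ | ‖z‖ ≤ β}ᶜ = 0 := by
      refine le_zero_iff.1 (le_trans (measure_mono ?_) hzero.le)
      intro z hz
      simp only [Set.mem_compl_iff, Set.mem_setOf_eq, not_le] at hz
      exact le_of_lt hz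
    have hEc : E {z : ℂ | ‖z‖ ≤ β}ᶜ f = 0 := by
      have h2 : ENNReal.ofReal (‖E {z : ℂ | ‖z‖ ≤ β}ᶜ f‖ ^ 2) = 0 := by
        rw [← hE.mu_def f _ hm.compl, hcompl0]
      rw [ENNReal.ofReal_eq_zero] at h2
      have h3 : ‖E {z : ℂ | ‖z‖ ≤ β}ᶜ f‖ ^ 2 = 0 :=
        le_antisymm h2 (by positivity)
      have h4 : ‖E {z : ℂ | ‖z‖ ≤ β}ᶜ f‖ = 0 :=
        pow_eq_zero_iff (two_ne_zero) |>.1 h3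
      exact norm_eq_zero.1 h4
    exact hE.eq_of_compl_eq_zero hm hEc
  · rintro ⟨α, hα, g, hg⟩
    refine ⟨α, hα, ‖f‖ + 1, by positivity, fun n => ?_⟩
    have hm : MeasurableSet {z : ℂ | ‖z‖ ≤ α} :=
      (isClosed_le continuous_norm continuous_const).measurableSet
    have hEc : E {z : ℂ | ‖z‖ ≤ α}ᶜ f = 0 := by
      rw [← hg, ← ContinuousLinearMap.comp_apply, ← hE.inter _ _ hm.compl hm,
        Set.compl_inter_self, hE.empty]
      rfl
    have hcompl0 : μ f {z : ℂ | ‖z‖ ≤ α}ᶜ = 0 := by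
      rw [hE.mu_def f _ hm.compl, hEc]
      simp
    have hae : ∀ᵐ z ∂(μ f), ‖z‖ ≤ α := by
      rw [ae_iff]
      exact hcompl0
    have hint : ∫⁻ z : ℂ, ENNReal.ofReal (‖z‖ ^ (2 * n)) ∂(μ f) ≤
        ENNReal.ofReal (α ^ (2 * n) * ‖f‖ ^ 2) := by
      calc ∫⁻ z : ℂ, ENNReal.ofReal (‖z‖ ^ (2 * n)) ∂(μ f)
          ≤ ∫⁻ _ : ℂ, ENNReal.ofReal (α ^ (2 * n)) ∂(μ f) := by
            refine lintegral_mono_ae ?_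
            filter_upwards [hae] with z hz
            exact ENNReal.ofReal_le_ofReal (pow_le_pow_left₀ (norm_nonneg z) hz _)
        _ = ENNReal.ofReal (α ^ (2 * n)) * μ f Set.univ := lintegral_const _
        _ = ENNReal.ofReal (α ^ (2 * n) * ‖f‖ ^ 2) := by
            rw [hE.mu_univ, ← ENNReal.ofReal_mul (by positivity)]
    have hkey : ‖(A ^ n) f‖ ^ 2 ≤ α ^ (2 * n) * ‖f‖ ^ 2 := by
      have := (hE.norm_pow_eq f n).le.trans hint
      exact (ENNReal.ofReal_le_ofReal_iff (by positivity)).1 this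
    have hsq : ‖(A ^ n) f‖ ^ 2 ≤ (α ^ n * ‖f‖) ^ 2 := by
      rw [mul_pow, ← pow_mul, mul_comm n 2]
      exact hkey
    have := Real.sqrt_le_sqrt hsq
    rw [Real.sqrt_sq (norm_nonneg _), Real.sqrt_sq (by positivity)] at this
    calc ‖(A ^ n) f‖ ≤ α ^ n * ‖f‖ := this
      _ ≤ (‖f‖ + 1) * α ^ n := by
          have : (0:ℝ) ≤ α ^ n := by positivity
          nlinarith [norm_nonneg f]
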